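/- Let σ₀ > 0, τ ∈ ℝ, and set σ = −σ₀ + iτ (a point of the vertical line Re σ = −σ₀ in ℂ). Then for all real s ≥ 0 and λ ≥ 0: | (σ + s) / ( 2(σ − λ)(σ − s)² ) | ≤ λ/(σ₀² + τ²)^{3/2} + 3/(2(σ₀² + τ²)). -/

import Mathlib

open Complex Real

theorem stmt_18 (σ₀ τ : ℝ) (hσ₀ : 0 < σ₀) (σ : ℂ) (hσ : σ = -(σ₀ : ℂ) + (τ : ℂ) * Complex.I)
    (s lam : ℝ) (hs : 0 ≤ s) (hlam : 0 ≤ lam) :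
    ‖(σ + (s : ℂ)) / (2 * (σ - (lam : ℂ)) * (σ - (s : ℂ)) ^ 2)‖ ≤
      lam / (σ₀ ^ 2 + τ ^ 2) ^ ((3 : ℝ) / 2) + 3 / (2 * (σ₀ ^ 2 + τ ^ 2)) := by
  set x : ℝ := σ₀ ^ 2 + τ ^ 2 with hx
  have hxpos : 0 < x := by positivity
  set R : ℝ := Real.sqrt x with hRdef
  have hR : 0 < R := Real.sqrt_pos.mpr hxpos
  have hRsq : R ^ 2 = x := Real.sq_sqrt hxpos.le
  set A : ℝ := ‖σ - (lam : ℂ)‖ with hAdef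
  set P : ℝ := ‖σ - (s : ℂ)‖ with hPdef
  have hnormA : Complex.normSq (σ - (lam : ℂ)) = (σ₀ + lam) ^ 2 + τ ^ 2 := by
    simp [hσ, Complex.normSq_apply]; ring
  have hnormP : Complex.normSq (σ - (s : ℂ)) = (σ₀ + s) ^ 2 + τ ^ 2 := by
    simp [hσ, Complex.normSq_apply]; ring
  have hA : R ≤ A := by
    rw [hAdef, Complex.norm_def, hnormA, hRdef]
    exact Real.sqrt_le_sqrt (by nlinarith)
  have hP : R ≤ P := by
    rw [hPdef, Complex.norm_def, hnormP, hRdef]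
    exact Real.sqrt_le_sqrt (by nlinarith)
  have hPs : s ≤ P := by
    rw [hPdef, Complex.norm_def, hnormP]
    exact (Real.le_sqrt hs (by positivity)).mpr (by nlinarith)
  have hApos : 0 < A := lt_of_lt_of_le hR hA
  have hPpos : 0 < P := lt_of_lt_of_le hR hP
  have hN : ‖σ + (s : ℂ)‖ ≤ A + lam + s := by
    have heq : σ + (s : ℂ) = (σ - (lam : ℂ)) + ((lam : ℂ) + (s : ℂ)) := by ring
    rw [heq]
    calc ‖(σ - (lam : ℂ)) + ((lam : ℂ) + (s : ℂ))‖
        ≤ A + ‖(lam : ℂ) + (s : ℂ)‖ := norm_add_le _ _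
      _ ≤ A + lam + s := by
          rw [← Complex.ofReal_add, Complex.norm_real, Real.norm_eq_abs,
            _root_.abs_of_nonneg (by linarith), add_assoc]
  have hLHS : ‖(σ + (s : ℂ)) / (2 * (σ - (lam : ℂ)) * (σ - (s : ℂ)) ^ 2)‖
      = ‖σ + (s : ℂ)‖ / (2 * A * P ^ 2) := by
    rw [norm_div, norm_mul, norm_mul, norm_pow]
    norm_num
    rw [hAdef, hPdef]
  have hrpow : x ^ ((3 : ℝ) / 2) = R ^ 3 := by
    rw [hRdef, Real.sqrt_eq_rpow, ← Real.rpow_natCast (x ^ ((1:ℝ)/2)) 3,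
      ← Real.rpow_mul hxpos.le]
    norm_num
  rw [hLHS, hrpow, ← hRsq]
  set N : ℝ := ‖σ + (s : ℂ)‖ with hNdef
  have hNpos : 0 ≤ N := norm_nonneg _
  clear_value R A P N
  clear hRdef hAdef hPdef hNdef hnormA hnormP hrpow hLHS hRsq hx hσ
  rw [div_add_div _ _ (by positivity) (by positivity),
    div_le_div_iff₀ (by positivity) (by positivity)]
  have hP2 : R ^ 2 ≤ P ^ 2 := pow_le_pow_left₀ hR.le hP 2
  have k1 : A * R ^ 5 ≤ R ^ 3 * A * P ^ 2 := by
    nlinarith [mul_le_mul_of_nonneg_right hP2 (mul_nonneg hApos.le (pow_nonneg hR.le 3))]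
  have k2 : lam * R ^ 5 ≤ lam * (R ^ 2 * A * P ^ 2) := by
    have h3 : R ^ 3 ≤ A * P ^ 2 := by
      nlinarith [mul_le_mul hA hP2 (sq_nonneg R) hApos.le]
    nlinarith [mul_le_mul_of_nonneg_left h3 hlam, mul_nonneg hlam (sq_nonneg R)]
  have k3 : s * R ^ 5 ≤ R ^ 3 * A * P ^ 2 := by
    have h4 : s * R * R ≤ P * P * A := by
      nlinarith [mul_le_mul hPs hP hR.le hPpos.le]
    nlinarith [mul_le_mul_of_nonneg_right h4 (pow_nonneg hR.le 3)]
  have hN5 : N * (2 * R ^ 5) ≤ (A + lam + s) * (2 * R ^ 5) :=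
    mul_le_mul_of_nonneg_right hN (by positivity)
  nlinarith [k1, k2, k3, hN5,
    mul_nonneg (mul_nonneg (mul_nonneg hlam (sq_nonneg R)) hApos.le) (sq_nonneg P),
    mul_nonneg (mul_nonneg (pow_nonneg hR.le 3) hApos.le) (sq_nonneg P)]
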